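/- Let 0 < a < b < c < d be integers with gcd(a, b, c, d) = 1 and c ≥ d − a. Then there exists a complex number z with |z| = 1 such that |1 + z^a + z^b + z^c + z^d| ≤ 1 + π/5. -/

import Mathlib

open Real


-- modular inverse existence
lemma inv_exists (u n t : ℕ) (h : Nat.Coprime u n) : ∃ K, u * K ≡ t [MOD n] := by
  rcases Nat.lt_or_ge n 2 with hn | hn
  · interval_cases n
    · have hu : u = 1 := by simpa [Nat.coprime_zero_right] using h
      exact ⟨t, by simp [hu]⟩
    · exact ⟨0, Nat.modEq_one⟩
  · obtain ⟨m, -, hm⟩ := Nat.exists_mul_mod_eq_one_of_coprime h hn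
    refine ⟨m * t, ?_⟩
    have h1 : u * m ≡ 1 [MOD n] := by
      unfold Nat.ModEq
      rw [hm, Nat.mod_eq_of_lt hn]
    calc u * (m * t) = (u * m) * t := by ring
    _ ≡ 1 * t [MOD n] := h1.mul_right t
    _ = t := one_mul t

lemma nt (w x : ℕ) (hw : 0 < w) (hx : 0 < x) :
    ∃ (K r : ℕ) (M : ℤ), Odd K ∧ r ≤ Nat.gcd w x ∧ (w : ℤ) * K = x + r + 2 * x * M := by
  obtain ⟨w', hw'⟩ := Nat.gcd_dvd_left w x
  obtain ⟨x', hx'⟩ := Nat.gcd_dvd_right w x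
  set g := Nat.gcd w x with hg
  have hg0 : 0 < g := Nat.gcd_pos_of_pos_left x hw
  have hw'0 : 0 < w' := by
    rcases Nat.eq_zero_or_pos w' with h0 | h0
    · subst h0; simp at hw'; omega
    · exact h0
  have hx'0 : 0 < x' := by
    rcases Nat.eq_zero_or_pos x' with h0 | h0
    · subst h0; simp at hx'; omega
    · exact h0
  have hco : Nat.Coprime w' x' := by
    have := Nat.coprime_div_gcd_div_gcd (m := w) (n := x) hg0
    have e1 : w / g = w' := by rw [hw']; exact Nat.mul_div_cancel_left w' hg0
    have e2 : x / g = x' := by rw [hx']; exact Nat.mul_div_cancel_left x' hg0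
    rwa [e1, e2] at this
  -- main claim mod 2x'
  have main : ∃ (K δ : ℕ), Odd K ∧ δ ≤ 1 ∧ w' * K ≡ x' + δ [MOD 2 * x'] := by
    rcases Nat.even_or_odd w' with hwe | hwo
    · -- w' even, x' odd
      have hx'odd : x' % 2 = 1 := by
        rcases Nat.even_or_odd x' with hxe | hxo
        · exfalso
          have h2 : (2 : ℕ) ∣ Nat.gcd w' x' :=
            Nat.dvd_gcd hwe.two_dvd hxe.two_dvd
          rw [hco] at h2
          omega
        · exact Nat.odd_iff.mp hxo
      obtain ⟨w'', hw''⟩ := hwe.two_dvd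
      have hco'' : Nat.Coprime w'' x' := Nat.Coprime.coprime_dvd_left ⟨2, by omega⟩ hco
      obtain ⟨K₀, hK₀⟩ := inv_exists w'' x' ((x' + 1) / 2) hco''
      have h2 : 2 * (w'' * K₀) ≡ 2 * ((x' + 1) / 2) [MOD 2 * x'] := hK₀.mul_left' 2
      have e3 : 2 * ((x' + 1) / 2) = x' + 1 := by omega
      have hK : w' * K₀ ≡ x' + 1 [MOD 2 * x'] := by
        have : w' * K₀ = 2 * (w'' * K₀) := by rw [hw'']; ring
        rw [this, ← e3]
        exact h2
      rcases Nat.even_or_odd K₀ with hKe | hKo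
      · -- adjust parity: K₀ + x'
        refine ⟨K₀ + x', 1, ?_, le_refl 1, ?_⟩
        · rcases hKe with ⟨j, hj⟩
          exact ⟨j + (x' - 1) / 2, by omega⟩
        · have hz : w' * x' ≡ 0 [MOD 2 * x'] := by
            apply (Nat.modEq_zero_iff_dvd).mpr
            exact ⟨w'', by rw [hw'']; ring⟩
          calc w' * (K₀ + x') = w' * K₀ + w' * x' := by ring
          _ ≡ (x' + 1) + 0 [MOD 2 * x'] := hK.add hz
          _ = x' + 1 := by ring
      · exact ⟨K₀, 1, hKo, le_refl 1, hK⟩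
    · -- w' odd
      have hcop2 : Nat.Coprime w' (2 * x') := by
        apply Nat.Coprime.mul_right _ hco
        rcases hwo with ⟨j, hj⟩
        have : Nat.gcd w' 2 ∣ w' := Nat.gcd_dvd_left _ _
        have h2 : Nat.gcd w' 2 ∣ 2 := Nat.gcd_dvd_right _ _
        unfold Nat.Coprime
        rcases (Nat.dvd_prime Nat.prime_two).mp h2 with h | h
        · exact h
        · exfalso; rw [h] at this; omega
      set δ : ℕ := if x' % 2 = 1 then 0 else 1 with hδ
      have hδ1 : δ ≤ 1 := by simp only [hδ]; split <;> omega
      obtain ⟨K, hK⟩ := inv_exists w' (2 * x') (x' + δ) hcop2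
      refine ⟨K, δ, ?_, hδ1, hK⟩
      -- parity
      have hm2 : w' * K ≡ x' + δ [MOD 2] := hK.of_dvd (dvd_mul_right 2 x')
      have hw2 : w' % 2 = 1 := Nat.odd_iff.mp hwo
      have hT : (x' + δ) % 2 = 1 := by simp only [hδ]; split <;> omega
      unfold Nat.ModEq at hm2
      rw [Nat.odd_iff]
      have h5 := Nat.mul_mod w' K 2
      rw [hw2, one_mul] at h5
      omega
  obtain ⟨K, δ, hKodd, hδ, hmod⟩ := main
  have hdvd := hmod.dvd
  obtain ⟨M₀, hM₀⟩ := hdvd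
  have hrg : g * δ ≤ g := by
    calc g * δ ≤ g * 1 := Nat.mul_le_mul_left g hδ
    _ = g := by ring
  refine ⟨K, g * δ, -M₀, hKodd, hrg, ?_⟩
  have hwz : (w : ℤ) = (g : ℤ) * (w' : ℤ) := by exact_mod_cast hw'
  have hxz : (x : ℤ) = (g : ℤ) * (x' : ℤ) := by exact_mod_cast hx'
  have hM : ((x' : ℤ) + δ) - (w' : ℤ) * K = 2 * x' * M₀ := by push_cast at hM₀ ⊢; linarith [hM₀]
  rw [hwz, hxz]
  push_cast
  linear_combination (-(g : ℤ)) * hM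


lemma abs_one_add_exp (t : ℝ) :
    ‖1 + Complex.exp (t * Complex.I)‖ = 2 * |Real.cos (t / 2)| := by
  have key : (1 : ℂ) + Complex.exp (t * Complex.I)
      = Complex.exp ((t/2 : ℝ) * Complex.I) * (2 * Complex.cos ((t/2 : ℝ) : ℂ)) := by
    rw [Complex.two_cos, mul_add, ← Complex.exp_add, ← Complex.exp_add]
    rw [show ((t/2 : ℝ) : ℂ) * Complex.I + ((t/2 : ℝ) : ℂ) * Complex.I = (t : ℝ) * Complex.I by
      push_cast; ring]
    rw [show ((t/2 : ℝ) : ℂ) * Complex.I + -((t/2 : ℝ) : ℂ) * Complex.I = 0 by ring]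
    rw [Complex.exp_zero]
    ring
  rw [key, norm_mul, Complex.norm_exp_ofReal_mul_I, one_mul]
  rw [show (2 * Complex.cos ((t/2 : ℝ) : ℂ) : ℂ) = ((2 * Real.cos (t/2) : ℝ) : ℂ) by
    rw [← Complex.ofReal_cos]; push_cast; ring]
  rw [Complex.norm_real, Real.norm_eq_abs, abs_mul]
  norm_num


lemma key_lemma (w x : ℕ) (hw : 0 < w) (hgx : 5 * Nat.gcd w x ≤ x) :
    ∃ z : ℂ, ‖z‖ = 1 ∧ z ^ x = -1 ∧ ‖1 + z ^ w‖ ≤ π / 5 := by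
  have hgpos : 0 < Nat.gcd w x := Nat.gcd_pos_of_pos_left x hw
  have hx : 0 < x := by omega
  obtain ⟨K, r, M, hK, hr, heq⟩ := nt w x hw hx
  have hxR : (x : ℝ) ≠ 0 := by positivity
  have hxC : (x : ℂ) ≠ 0 := by exact_mod_cast (by positivity : (x:ℝ) ≠ 0)
  set θ : ℝ := K * π / x with hθ
  refine ⟨Complex.exp ((θ : ℝ) * Complex.I), Complex.norm_exp_ofReal_mul_I θ, ?_, ?_⟩
  · rw [← Complex.exp_nat_mul]
    have e1 : (x : ℂ) * ((θ : ℝ) * Complex.I) = (K : ℕ) * (π * Complex.I) := by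
      rw [hθ]; push_cast; field_simp
    rw [e1, Complex.exp_nat_mul, Complex.exp_pi_mul_I]
    exact hK.neg_one_pow
  · rw [← Complex.exp_nat_mul]
    have e2 : (w : ℂ) * ((θ : ℝ) * Complex.I) = ((w * K * π / x : ℝ) : ℂ) * Complex.I := by
      rw [hθ]; push_cast; field_simp
    rw [e2, abs_one_add_exp]
    -- bound the cosine
    have hreal : (w : ℝ) * K = x + r + 2 * x * M := by exact_mod_cast heq
    have harg : (w * K * π / x) / 2 = (π / 2 + r * π / (2 * x)) + M * π := by
      rw [show (w : ℝ) * K * π = ((x : ℝ) + r + 2 * x * M) * π by rw [← hreal]]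
      field_simp
    have habs1 : |((-1 : ℝ)) ^ M| = 1 := by
      rcases Int.even_or_odd M with he | ho
      · rw [he.neg_one_zpow]; norm_num
      · rw [ho.neg_one_zpow]; norm_num
    rw [harg, Real.cos_add_int_mul_pi, abs_mul, habs1, one_mul]
    have hcos : Real.cos (π / 2 + (r : ℝ) * π / (2 * (x : ℝ)))
        = - Real.sin ((r : ℝ) * π / (2 * (x : ℝ))) := by
      rw [show π / 2 + (r : ℝ) * π / (2 * (x : ℝ))
          = π / 2 - (-((r : ℝ) * π / (2 * (x : ℝ)))) by ring,
        Real.cos_pi_div_two_sub, Real.sin_neg]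
    rw [hcos, abs_neg]
    set s : ℝ := r * π / (2 * x) with hs
    have hs0 : 0 ≤ s := by positivity
    have hs10 : s ≤ π / 10 := by
      rw [hs]
      rw [div_le_div_iff₀ (by positivity) (by norm_num)]
      have : (r : ℝ) ≤ (x : ℝ) / 5 := by
        rw [le_div_iff₀ (by norm_num)]
        have : (5 : ℝ) * r ≤ (x : ℝ) := by exact_mod_cast (by omega : 5 * r ≤ x)
        linarith
      nlinarith [pi_pos]
    have habs : |Real.sin s| = Real.sin s :=
      abs_of_nonneg (Real.sin_nonneg_of_nonneg_of_le_pi hs0 (by nlinarith [pi_pos]))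
    rw [habs]
    have := Real.sin_le hs0
    nlinarith [pi_pos]


lemma step1 (e d : ℕ) (he : 0 < e) (hed : e < d) (h : d < 5 * Nat.gcd e d) :
    12 * e = 3 * d ∨ 12 * e = 4 * d ∨ 12 * e = 6 * d ∨ 12 * e = 8 * d ∨ 12 * e = 9 * d := by
  obtain ⟨m, hm⟩ := Nat.gcd_dvd_left e d
  obtain ⟨k, hk⟩ := Nat.gcd_dvd_right e d
  set g := Nat.gcd e d with hg
  have hg0 : 0 < g := Nat.gcd_pos_of_pos_left d he
  have hk5 : k < 5 := by
    by_contra hh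
    push_neg at hh
    have : g * 5 ≤ g * k := Nat.mul_le_mul_left g hh
    omega
  have hmk : m < k := by
    have hlt : g * m < g * k := by omega
    exact Nat.lt_of_mul_lt_mul_left hlt
  have hm0 : 0 < m := by
    rcases Nat.eq_zero_or_pos m with h0 | h0
    · subst h0; simp at hm; omega
    · exact h0
  interval_cases k <;> interval_cases m <;> omega

lemma arith (a b c d : ℕ) (ha : 0 < a) (hab : a < b) (hbc : b < c) (hcd : c < d)
    (h1 : d < 5 * Nat.gcd (b - a) d) (h2 : d < 5 * Nat.gcd (c - b) d)
    (h3 : d < 5 * Nat.gcd (c - a) d) (h4 : c < 5 * Nat.gcd (b - a) c) :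
    b = 2 * a ∧ c = 3 * a ∧ d = 4 * a := by
  set p := b - a with hp
  set q := c - b with hq
  have hpq : c - a = p + q := by omega
  rw [hpq] at h3
  have hp0 : 0 < p := by omega
  have hq0 : 0 < q := by omega
  have s1 := step1 p d (by omega) (by omega) h1
  have s2 := step1 q d (by omega) (by omega) h2
  have s3 := step1 (p + q) d (by omega) (by omega) h3
  have hshape : (d = 4 * p ∧ q = p) ∨ (d = 4 * p ∧ q = 2 * p)
      ∨ (d = 4 * q ∧ p = 2 * q) ∨ (d = 3 * p ∧ q = p) := by
    rcases s1 with h | h | h | h | h <;> rcases s2 with h' | h' | h' | h' | h' <;>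
      rcases s3 with h'' | h'' | h'' | h'' | h'' <;> omega
  have hdp : Nat.gcd p c ∣ p := Nat.gcd_dvd_left _ _
  have hdc : Nat.gcd p c ∣ c := Nat.gcd_dvd_right _ _
  have hh0 : 0 < Nat.gcd p c := Nat.gcd_pos_of_pos_left c hp0
  set h0 := Nat.gcd p c with hh
  rcases hshape with ⟨hd, hqp⟩ | ⟨hd, hqp⟩ | ⟨hd, hqp⟩ | ⟨hd, hqp⟩
  · -- shape A : d = 4p, q = p, c = a + 2p
    have hda : h0 ∣ a := by
      have := Nat.dvd_sub hdc (hdp.mul_left 2)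
      have e : c - 2 * p = a := by omega
      rwa [e] at this
    obtain ⟨t, ht⟩ := hdp
    obtain ⟨u, hu⟩ := hda
    have ht0 : 0 < t := by
      rcases Nat.eq_zero_or_pos t with h0' | h0'
      · subst h0'; simp at ht; omega
      · exact h0'
    have hu0 : 0 < u := by
      rcases Nat.eq_zero_or_pos u with h0' | h0'
      · subst h0'; simp at hu; omega
      · exact h0'
    have h5 : h0 * (u + 2 * t) < h0 * 5 := by
      have e : h0 * (u + 2 * t) = a + 2 * p := by rw [hu, ht]; ring
      omega
    have h5' : u + 2 * t < 5 := Nat.lt_of_mul_lt_mul_left h5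
    have hau : h0 * u < h0 * (2 * t) := by
      have e : h0 * (2 * t) = 2 * p := by rw [ht]; ring
      omega
    have haut : u < 2 * t := Nat.lt_of_mul_lt_mul_left hau
    have htu : t = 1 ∧ u = 1 := by omega
    rw [htu.1] at ht
    rw [htu.2] at hu
    refine ⟨by omega, by omega, by omega⟩
  · -- shape B : d = 4p, q = 2p, c = a + 3p, a < p : contradiction
    exfalso
    have hda : h0 ∣ a := by
      have := Nat.dvd_sub hdc (hdp.mul_left 3)
      have e : c - 3 * p = a := by omega
      rwa [e] at this
    obtain ⟨t, ht⟩ := hdp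
    obtain ⟨u, hu⟩ := hda
    have ht0 : 0 < t := by
      rcases Nat.eq_zero_or_pos t with h0' | h0'
      · subst h0'; simp at ht; omega
      · exact h0'
    have hu0 : 0 < u := by
      rcases Nat.eq_zero_or_pos u with h0' | h0'
      · subst h0'; simp at hu; omega
      · exact h0'
    have h5 : h0 * (u + 3 * t) < h0 * 5 := by
      have e : h0 * (u + 3 * t) = a + 3 * p := by rw [hu, ht]; ring
      omega
    have h5' : u + 3 * t < 5 := Nat.lt_of_mul_lt_mul_left h5
    have hau : h0 * u < h0 * t := by
      have e : h0 * t = p := by rw [ht]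
      omega
    have haut : u < t := Nat.lt_of_mul_lt_mul_left hau
    omega
  · -- shape C : d = 4q, p = 2q, c = a + 3q, a < q : contradiction
    exfalso
    obtain ⟨t, ht⟩ := hdp
    obtain ⟨s, hs⟩ := hdc
    have ht0 : 0 < t := by
      rcases Nat.eq_zero_or_pos t with h0' | h0'
      · subst h0'; simp at ht; omega
      · exact h0'
    have h5 : h0 * s < h0 * 5 := by omega
    have h5' : s < 5 := Nat.lt_of_mul_lt_mul_left h5
    -- 3t < 2s : from 3p < 2c
    have h31 : h0 * (3 * t) < h0 * (2 * s) := by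
      have e1 : h0 * (3 * t) = 3 * p := by rw [ht]; ring
      have e2 : h0 * (2 * s) = 2 * c := by rw [hs]; ring
      omega
    have h32 : 3 * t < 2 * s := Nat.lt_of_mul_lt_mul_left h31
    -- 2s < 4t : from 2c < 4p
    have h41 : h0 * (2 * s) < h0 * (4 * t) := by
      have e1 : h0 * (4 * t) = 4 * p := by rw [ht]; ring
      have e2 : h0 * (2 * s) = 2 * c := by rw [hs]; ring
      omega
    have h42 : 2 * s < 4 * t := Nat.lt_of_mul_lt_mul_left h41
    omega
  · -- shape D : d = 3p, q = p, c = a + 2p, a < p : contradiction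
    exfalso
    have hda : h0 ∣ a := by
      have := Nat.dvd_sub hdc (hdp.mul_left 2)
      have e : c - 2 * p = a := by omega
      rwa [e] at this
    obtain ⟨t, ht⟩ := hdp
    obtain ⟨u, hu⟩ := hda
    have ht0 : 0 < t := by
      rcases Nat.eq_zero_or_pos t with h0' | h0'
      · subst h0'; simp at ht; omega
      · exact h0'
    have hu0 : 0 < u := by
      rcases Nat.eq_zero_or_pos u with h0' | h0'
      · subst h0'; simp at hu; omega
      · exact h0'
    have h5 : h0 * (u + 2 * t) < h0 * 5 := by
      have e : h0 * (u + 2 * t) = a + 2 * p := by rw [hu, ht]; ring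
      omega
    have h5' : u + 2 * t < 5 := Nat.lt_of_mul_lt_mul_left h5
    have hau : h0 * u < h0 * t := by
      have e : h0 * t = p := by rw [ht]
      omega
    have haut : u < t := Nat.lt_of_mul_lt_mul_left hau
    omega


lemma tri_bound (z A : ℂ) (n : ℕ) (hz : ‖z‖ = 1) (hA : ‖A‖ ≤ π / 5) :
    ‖A + z ^ n‖ ≤ 1 + π / 5 := by
  calc ‖A + z ^ n‖ ≤ ‖A‖ + ‖z ^ n‖ := norm_add_le _ _
  _ = ‖A‖ + 1 := by rw [norm_pow, hz, one_pow]
  _ ≤ 1 + π / 5 := by linarith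

lemma pair_abs (z : ℂ) (hz : ‖z‖ = 1) (i j : ℕ) (hij : i ≤ j)
    (hb : ‖1 + z ^ (j - i)‖ ≤ π / 5) :
    ‖z ^ i + z ^ j‖ ≤ π / 5 := by
  have hzj : z ^ j = z ^ i * z ^ (j - i) := by
    rw [← pow_add]
    congr 1
    omega
  calc ‖z ^ i + z ^ j‖ = ‖z ^ i * (1 + z ^ (j - i))‖ := by
        rw [hzj]; ring_nf
  _ = ‖1 + z ^ (j - i)‖ := by rw [norm_mul, norm_pow, hz, one_pow, one_mul]
  _ ≤ π / 5 := hb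

theorem stmt_19 (a b c d : ℕ) (ha : 0 < a) (hab : a < b) (hbc : b < c) (hcd : c < d)
    (hgcd : Nat.gcd (Nat.gcd (Nat.gcd a b) c) d = 1) (hca : d - a ≤ c) :
    ∃ z : ℂ, ‖z‖ = 1 ∧
      ‖1 + z ^ a + z ^ b + z ^ c + z ^ d‖ ≤ 1 + π / 5 := by
  by_cases h1 : 5 * Nat.gcd (b - a) d ≤ d
  · obtain ⟨z, hz, hzx, hzw⟩ := key_lemma (b - a) d (by omega) h1
    refine ⟨z, hz, ?_⟩
    have he : (1 : ℂ) + z ^ a + z ^ b + z ^ c + z ^ d = (z ^ a + z ^ b) + z ^ c := by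
      rw [hzx]; ring
    rw [he]
    exact tri_bound z _ c hz (pair_abs z hz a b (by omega) hzw)
  by_cases h2 : 5 * Nat.gcd (c - b) d ≤ d
  · obtain ⟨z, hz, hzx, hzw⟩ := key_lemma (c - b) d (by omega) h2
    refine ⟨z, hz, ?_⟩
    have he : (1 : ℂ) + z ^ a + z ^ b + z ^ c + z ^ d = (z ^ b + z ^ c) + z ^ a := by
      rw [hzx]; ring
    rw [he]
    exact tri_bound z _ a hz (pair_abs z hz b c (by omega) hzw)
  by_cases h3 : 5 * Nat.gcd (c - a) d ≤ d
  · obtain ⟨z, hz, hzx, hzw⟩ := key_lemma (c - a) d (by omega) h3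
    refine ⟨z, hz, ?_⟩
    have he : (1 : ℂ) + z ^ a + z ^ b + z ^ c + z ^ d = (z ^ a + z ^ c) + z ^ b := by
      rw [hzx]; ring
    rw [he]
    exact tri_bound z _ b hz (pair_abs z hz a c (by omega) hzw)
  by_cases h4 : 5 * Nat.gcd (b - a) c ≤ c
  · obtain ⟨z, hz, hzx, hzw⟩ := key_lemma (b - a) c (by omega) h4
    refine ⟨z, hz, ?_⟩
    have he : (1 : ℂ) + z ^ a + z ^ b + z ^ c + z ^ d = (z ^ a + z ^ b) + z ^ d := by
      rw [hzx]; ring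
    rw [he]
    exact tri_bound z _ d hz (pair_abs z hz a b (by omega) hzw)
  -- final case : (a,b,c,d) = (1,2,3,4)
  push_neg at h1 h2 h3 h4
  obtain ⟨hb2, hc3, hd4⟩ := arith a b c d ha hab hbc hcd h1 h2 h3 h4
  have ha1 : a = 1 := by
    have e1 : Nat.gcd a b = a := Nat.gcd_eq_left ⟨2, by omega⟩
    have e2 : Nat.gcd a c = a := Nat.gcd_eq_left ⟨3, by omega⟩
    have e3 : Nat.gcd a d = a := Nat.gcd_eq_left ⟨4, by omega⟩
    rw [e1, e2, e3] at hgcd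
    exact hgcd
  have hb' : b = 2 := by omega
  have hc' : c = 3 := by omega
  have hd' : d = 4 := by omega
  subst ha1 hb' hc' hd'
  set z : ℂ := Complex.exp (((2 * π / 5 : ℝ) : ℂ) * Complex.I) with hzdef
  have hz1 : ‖z‖ = 1 := Complex.norm_exp_ofReal_mul_I _
  have hz5 : z ^ 5 = 1 := by
    rw [hzdef, ← Complex.exp_nat_mul]
    rw [show ((5 : ℕ) : ℂ) * (((2 * π / 5 : ℝ) : ℂ) * Complex.I) = 2 * π * Complex.I by
      push_cast; ring]
    exact Complex.exp_two_pi_mul_I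
  have hzne : z ≠ 1 := by
    rw [hzdef]
    intro h
    rw [Complex.exp_eq_one_iff] at h
    obtain ⟨n, hn⟩ := h
    have him := congrArg Complex.im hn
    simp [Complex.mul_im, Complex.ofReal_re, Complex.ofReal_im] at him
    rcases le_or_gt (n : ℝ) 0 with hn0 | hn0
    · nlinarith [pi_pos]
    · have : (1 : ℝ) ≤ (n : ℝ) := by
        have : (0 : ℤ) < n := by exact_mod_cast hn0
        exact_mod_cast this
      nlinarith [pi_pos]
  have hsum : (1 : ℂ) + z ^ 1 + z ^ 2 + z ^ 3 + z ^ 4 = 0 := by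
    have hfac : (z - 1) * (1 + z ^ 1 + z ^ 2 + z ^ 3 + z ^ 4) = z ^ 5 - 1 := by ring
    have hzero : (z - 1) * (1 + z ^ 1 + z ^ 2 + z ^ 3 + z ^ 4) = 0 := by
      rw [hfac, hz5, sub_self]
    rcases mul_eq_zero.mp hzero with h | h
    · exact absurd (by linear_combination h : z = 1) hzne
    · exact h
  refine ⟨z, hz1, ?_⟩
  rw [hsum, norm_zero]
  positivity
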